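/- Let T be a d-dimensional simplex in ℝ^d whose interior contains exactly one point of ℤ^d, with barycentric coordinates β₀,…,β_d > 0 of that point, and let N ⊂ {0,…,d} with |N| = d. Then vol(T) ≤ 1 / (d! · ∏_{n∈N} β_n). -/

import Mathlib

open MeasureTheory Set
open scoped ENNReal NNReal

private lemma ties_null (d : ℕ) :
    volume {y : Fin d → ℝ | ¬ Function.Injective y} = 0 := by
  have hsub : {y : Fin d → ℝ | ¬ Function.Injective y} ⊆
      ⋃ (i : Fin d) (j : Fin d) (_ : i ≠ j),
        ((LinearMap.ker ((LinearMap.proj i : (Fin d → ℝ) →ₗ[ℝ] ℝ)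
          - LinearMap.proj j) : Submodule ℝ (Fin d → ℝ)) : Set (Fin d → ℝ)) := by
    intro y hy
    simp only [Function.Injective, not_forall, mem_setOf_eq] at hy
    obtain ⟨i, j, hij, hne⟩ := hy
    refine mem_iUnion.2 ⟨i, mem_iUnion.2 ⟨j, mem_iUnion.2 ⟨hne, ?_⟩⟩⟩
    simp only [SetLike.mem_coe, LinearMap.mem_ker, LinearMap.sub_apply, LinearMap.proj_apply,
      sub_eq_zero]
    exact hij
  refine measure_mono_null hsub ?_
  refine measure_iUnion_null fun i => measure_iUnion_null fun j => measure_iUnion_null fun hij =>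
    Measure.addHaar_submodule _ _ ?_
  intro h
  have hmem : Pi.single i (1:ℝ) ∈ LinearMap.ker ((LinearMap.proj i : (Fin d → ℝ) →ₗ[ℝ] ℝ)
      - LinearMap.proj j) := by rw [h]; trivial
  simp only [LinearMap.mem_ker, LinearMap.sub_apply, LinearMap.proj_apply, sub_eq_zero] at hmem
  rw [Pi.single_eq_same, Pi.single_eq_of_ne (Ne.symm hij)] at hmem
  exact one_ne_zero hmem

private lemma measurable_ties (d : ℕ) :
    MeasurableSet {y : Fin d → ℝ | Function.Injective y} := by
  have : {y : Fin d → ℝ | Function.Injective y}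
      = ⋂ (i : Fin d) (j : Fin d) (_ : i ≠ j), {y | y i ≠ y j} := by
    ext y
    simp only [mem_setOf_eq, mem_iInter, Function.Injective]
    constructor
    · intro h i j hij; exact fun he => hij (h he)
    · intro h i j he; by_contra hij; exact h i j hij he
  rw [this]
  exact MeasurableSet.iInter fun i => MeasurableSet.iInter fun j => MeasurableSet.iInter
    fun _ => (measurableSet_eq_fun (measurable_pi_apply i) (measurable_pi_apply j)).compl

private lemma measurable_mono (d : ℕ) :
    MeasurableSet {y : Fin d → ℝ | Monotone y} := by
  have : {y : Fin d → ℝ | Monotone y}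
      = ⋂ (i : Fin d) (j : Fin d) (_ : i ≤ j), {y | y i ≤ y j} := by
    ext y
    simp only [mem_setOf_eq, mem_iInter]
    exact ⟨fun h i j hij => h hij, fun h a b hab => h a b hab⟩
  rw [this]
  exact MeasurableSet.iInter fun i => MeasurableSet.iInter fun j => MeasurableSet.iInter
    fun _ => measurableSet_le (measurable_pi_apply i) (measurable_pi_apply j)

private lemma comp_perm_measurePreserving {d : ℕ} (σ : Equiv.Perm (Fin d)) :
    MeasurePreserving (fun y : Fin d → ℝ => y ∘ σ) volume volume := by
  have hco : (fun y : Fin d → ℝ => y ∘ σ)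
      = ⇑(MeasurableEquiv.piCongrLeft (fun _ : Fin d => ℝ) σ.symm) := by
    funext y
    rw [MeasurableEquiv.coe_piCongrLeft]
    funext i
    conv_rhs => rw [← Equiv.apply_symm_apply σ.symm i]
    rw [Equiv.piCongrLeft_apply_apply]
    simp
  rw [hco]
  exact volume_measurePreserving_piCongrLeft _ _

private lemma ordered_cell_vol (d : ℕ) :
    volume {y : Fin d → ℝ | (∀ i, y i ∈ Icc (0:ℝ) 1) ∧ Monotone y}
      ≤ ENNReal.ofReal (1 / d.factorial) := by
  classical
  set O₁ : Set (Fin d → ℝ) :=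
    {y | (∀ i, y i ∈ Icc (0:ℝ) 1) ∧ Monotone y ∧ Function.Injective y} with hO₁
  have hO₁meas : MeasurableSet O₁ := by
    have : O₁ = ((Set.pi univ fun _ : Fin d => Icc (0:ℝ) 1) ∩ {y | Monotone y})
        ∩ {y | Function.Injective y} := by
      ext y; simp only [hO₁, mem_setOf_eq, mem_inter_iff, mem_pi, mem_univ, forall_true_left,
        true_implies]
      tauto
    rw [this]
    exact ((MeasurableSet.pi countable_univ fun _ _ => measurableSet_Icc).inter
      (measurable_mono d)).inter (measurable_ties d)
  -- the cells
  set C : Equiv.Perm (Fin d) → Set (Fin d → ℝ) := fun σ => (fun y => y ∘ σ) ⁻¹' O₁ with hC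
  have hCmeas : ∀ σ, MeasurableSet (C σ) := fun σ =>
    (comp_perm_measurePreserving σ).measurable hO₁meas
  have hCvol : ∀ σ, volume (C σ) = volume O₁ := fun σ =>
    (comp_perm_measurePreserving σ).measure_preimage hO₁meas.nullMeasurableSet
  have hCmem : ∀ σ (y : Fin d → ℝ), y ∈ C σ ↔
      (∀ i, y i ∈ Icc (0:ℝ) 1) ∧ Monotone (y ∘ σ) ∧ Function.Injective y := by
    intro σ y
    simp only [hC, hO₁, mem_preimage, mem_setOf_eq]
    constructor
    · rintro ⟨h1, h2, h3⟩
      refine ⟨fun i => by simpa using h1 (σ.symm i), h2, fun a b hab => ?_⟩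
      have h := h3 (a₁ := σ.symm a) (a₂ := σ.symm b) (by simpa using hab)
      exact σ.symm.injective h
    · rintro ⟨h1, h2, h3⟩
      exact ⟨fun i => h1 (σ i), h2, h3.comp σ.injective⟩
  have hdisj : Pairwise (Function.onFun Disjoint C) := by
    intro σ τ hne
    rw [Function.onFun, Set.disjoint_left]
    intro y hyσ hyτ
    apply hne
    obtain ⟨h1, hmσ, hinj⟩ := (hCmem σ y).1 hyσ
    obtain ⟨-, hmτ, -⟩ := (hCmem τ y).1 hyτ
    have hsσ : StrictMono (y ∘ σ) := hmσ.strictMono_of_injective (hinj.comp σ.injective)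
    have hsτ : StrictMono (y ∘ τ) := hmτ.strictMono_of_injective (hinj.comp τ.injective)
    set π : Equiv.Perm (Fin d) := τ.trans σ.symm with hπdef
    have hπ : StrictMono ⇑π := by
      intro a b hab
      have h1 : (y ∘ σ) (π a) < (y ∘ σ) (π b) := by
        simpa [hπdef, Function.comp] using hsτ hab
      exact hsσ.lt_iff_lt.1 h1
    have hss : (⟨π, fun {a b} => hπ.le_iff_le⟩ : Fin d ≃o Fin d) = OrderIso.refl (Fin d) :=
      Subsingleton.elim _ _
    apply Equiv.ext
    intro i
    have h2 : π i = i := by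
      have := congrArg (fun (e : Fin d ≃o Fin d) => e i) hss
      simpa using this
    have h3 := congrArg σ h2
    simpa [hπdef] using h3.symm
  -- sum over permutations
  have hsum : ∑ σ : Equiv.Perm (Fin d), volume (C σ) ≤ 1 := by
    have hunion : volume (⋃ σ : Equiv.Perm (Fin d), C σ) = ∑' σ, volume (C σ) :=
      measure_iUnion hdisj hCmeas
    rw [tsum_fintype] at hunion
    rw [← hunion]
    have hsub : (⋃ σ : Equiv.Perm (Fin d), C σ) ⊆ Set.pi univ fun _ : Fin d => Icc (0:ℝ) 1 := by
      rintro y hy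
      obtain ⟨σ, hσ⟩ := mem_iUnion.1 hy
      obtain ⟨h1, -, -⟩ := (hCmem σ y).1 hσ
      exact fun i _ => h1 i
    calc volume (⋃ σ : Equiv.Perm (Fin d), C σ)
        ≤ volume (Set.pi univ fun _ : Fin d => Icc (0:ℝ) 1) := measure_mono hsub
      _ = 1 := by rw [volume_pi_pi]; simp [Real.volume_Icc]
  have hcard : ((d.factorial : ℝ≥0∞)) * volume O₁ ≤ 1 := by
    have h1 : ∑ σ : Equiv.Perm (Fin d), volume (C σ) = (d.factorial : ℝ≥0∞) * volume O₁ := by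
      rw [Finset.sum_congr rfl fun σ _ => hCvol σ, Finset.sum_const, nsmul_eq_mul, Finset.card_univ,
        Fintype.card_perm, Fintype.card_fin]
    rw [← h1]
    exact hsum
  have hO₁le : volume O₁ ≤ ENNReal.ofReal (1 / d.factorial) := by
    rw [one_div, ENNReal.ofReal_inv_of_pos (by exact_mod_cast d.factorial_pos),
      ENNReal.ofReal_natCast]
    rw [ENNReal.le_inv_iff_mul_le, mul_comm]
    exact hcard
  -- conclude
  calc volume {y : Fin d → ℝ | (∀ i, y i ∈ Icc (0:ℝ) 1) ∧ Monotone y}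
      ≤ volume (O₁ ∪ {y | ¬ Function.Injective y}) := by
        refine measure_mono fun y hy => ?_
        by_cases h : Function.Injective y
        · exact Or.inl ⟨hy.1, hy.2, h⟩
        · exact Or.inr h
    _ ≤ volume O₁ + volume {y : Fin d → ℝ | ¬ Function.Injective y} := measure_union_le _ _
    _ = volume O₁ := by rw [ties_null, add_zero]
    _ ≤ _ := hO₁le

private lemma simplex_vol (d : ℕ) :
    volume {x : Fin d → ℝ | (∀ i, 0 ≤ x i) ∧ ∑ i, x i ≤ 1}
      ≤ ENNReal.ofReal (1 / d.factorial) := by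
  classical
  set Δ : Set (Fin d → ℝ) := {x | (∀ i, 0 ≤ x i) ∧ ∑ i, x i ≤ 1} with hΔ
  set Amat : Matrix (Fin d) (Fin d) ℝ := Matrix.of fun i j => if j ≤ i then (1:ℝ) else 0
    with hA
  have hdet : Amat.det = 1 := by
    rw [Matrix.det_of_lowerTriangular]
    · simp [hA, Matrix.of_apply]
    · intro i j h
      have : i < j := h
      simp only [hA, Matrix.of_apply, ite_eq_right_iff]
      intro h'
      exact absurd h' (not_le.2 this)
  have happ : ∀ x : Fin d → ℝ, ∀ i, (Matrix.toLin' Amat) x i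
      = ∑ j ∈ Finset.univ.filter (· ≤ i), x j := by
    intro x i
    rw [Matrix.toLin'_apply]
    simp only [Matrix.mulVec, dotProduct, hA, Matrix.of_apply, ite_mul, one_mul, zero_mul]
    rw [Finset.sum_filter]
  have himg : ⇑(Matrix.toLin' Amat) '' Δ
      ⊆ {y : Fin d → ℝ | (∀ i, y i ∈ Icc (0:ℝ) 1) ∧ Monotone y} := by
    rintro - ⟨x, ⟨hx0, hx1⟩, rfl⟩
    constructor
    · intro i
      rw [happ]
      constructor
      · exact Finset.sum_nonneg fun j _ => hx0 j
      · calc ∑ j ∈ Finset.univ.filter (· ≤ i), x j ≤ ∑ j, x j :=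
              Finset.sum_le_sum_of_subset_of_nonneg (Finset.filter_subset _ _)
                (fun j _ _ => hx0 j)
          _ ≤ 1 := hx1
    · intro i i' hii'
      rw [happ, happ]
      refine Finset.sum_le_sum_of_subset_of_nonneg ?_ fun j _ _ => hx0 j
      intro j hj
      simp only [Finset.mem_filter, Finset.mem_univ, true_and] at hj ⊢
      exact hj.trans hii'
  calc volume Δ
      = ENNReal.ofReal |LinearMap.det (Matrix.toLin' Amat)| * volume Δ := by
        rw [LinearMap.det_toLin', hdet]; simp
    _ = volume (⇑(Matrix.toLin' Amat) '' Δ) := (Measure.addHaar_image_linearMap volume _ _).symm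
    _ ≤ volume {y : Fin d → ℝ | (∀ i, y i ∈ Icc (0:ℝ) 1) ∧ Monotone y} := measure_mono himg
    _ ≤ _ := ordered_cell_vol d

open Pointwise

private lemma simplex_vol' (d : ℕ) :
    volume {x : Fin d → ℝ | (∀ i, 0 ≤ x i) ∧ ∑ i, x i ≤ 1}
      ≤ ENNReal.ofReal (1 / d.factorial) := simplex_vol d

set_option maxHeartbeats 1000000 in
theorem stmt11 (d : ℕ) (p : Fin (d + 1) → Fin d → ℝ) (hp : AffineIndependent ℝ p)
    (T : Set (Fin d → ℝ)) (hT : T = convexHull ℝ (Set.range p))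
    (q : Fin d → ℤ) (hq : (fun j => ((q j : ℤ) : ℝ)) ∈ interior T)
    (huniq : ∀ q' : Fin d → ℤ, (fun j => ((q' j : ℤ) : ℝ)) ∈ interior T → q' = q)
    (β : Fin (d + 1) → ℝ) (hβpos : ∀ i, 0 < β i) (hβsum : ∑ i, β i = 1)
    (hbar : (∑ i, β i • p i) = fun j => ((q j : ℤ) : ℝ))
    (N : Finset (Fin (d + 1))) (hN : N.card = d) :
    MeasureTheory.volume T ≤
      ENNReal.ofReal (1 / ((d.factorial : ℝ) * ∏ n ∈ N, β n)) := by
  classical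
  subst hT
  -- basic setup
  have hfr : Module.finrank ℝ (Fin d → ℝ) = d := Module.finrank_fin_fun ℝ
  have hspan : affineSpan ℝ (Set.range p) = ⊤ := by
    rw [hp.affineSpan_eq_top_iff_card_eq_finrank_add_one]
    simp [hfr]
  let b : AffineBasis (Fin (d + 1)) ℝ (Fin d → ℝ) := ⟨p, hp, hspan⟩
  have hb : ⇑b = p := rfl
  have hcoord : ∀ γ : Fin (d + 1) → ℝ, ∑ i, γ i = 1 →
      ∀ i, b.coord i (∑ j, γ j • p j) = γ i := by
    intro γ hγ i
    have h1 : ∑ j, γ j • p j = (Finset.univ.affineCombination ℝ p) γ :=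
      (Finset.affineCombination_eq_linear_combination _ _ _ hγ).symm
    rw [h1]
    exact AffineBasis.coord_apply_combination_of_mem b (Finset.mem_univ i) hγ
  -- the missing index m
  obtain ⟨m, hm⟩ : ∃ m, Nᶜ = {m} :=
    Finset.card_eq_one.1 (by rw [Finset.card_compl, hN]; simp)
  have hmN : m ∉ N := by
    have : m ∈ Nᶜ := hm ▸ Finset.mem_singleton_self m
    exact Finset.mem_compl.1 this
  have hmem_m : ∀ n : Fin (d + 1), n ∉ N → n = m := by
    intro n hn
    have : n ∈ Nᶜ := Finset.mem_compl.2 hn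
    rw [hm, Finset.mem_singleton] at this
    exact this
  have huniv : insert m N = Finset.univ := by
    apply Finset.eq_univ_iff_forall.2
    intro n
    by_cases h : n ∈ N
    · exact Finset.mem_insert_of_mem h
    · rw [hmem_m n h]; exact Finset.mem_insert_self m N
  -- enumeration of N
  set e : Fin d ≃o {x // x ∈ N} := N.orderIsoOfFin hN with he
  set f : Fin d → Fin (d + 1) := fun i => (e i : Fin (d + 1)) with hf
  have hfN : ∀ i, f i ∈ N := fun i => (e i).2
  have hesymm : ∀ i, e.symm ⟨f i, hfN i⟩ = i := by
    intro i
    have h1 : (⟨f i, hfN i⟩ : {x // x ∈ N}) = e i := Subtype.ext rfl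
    rw [h1, OrderIso.symm_apply_apply]
  -- reindexing sums and products
  have hsumN : ∀ (g : Fin (d + 1) → ℝ), ∑ i, g (f i) = ∑ n ∈ N, g n := by
    intro g
    rw [← Finset.sum_coe_sort N g]
    exact Fintype.sum_equiv e.toEquiv _ _ (fun i => rfl)
  have hsumNV : ∀ (g : Fin (d + 1) → (Fin d → ℝ)), ∑ i, g (f i) = ∑ n ∈ N, g n := by
    intro g
    rw [← Finset.sum_coe_sort N g]
    exact Fintype.sum_equiv e.toEquiv _ _ (fun i => rfl)
  have hprodN : ∏ i, β (f i) = ∏ n ∈ N, β n := by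
    rw [← Finset.prod_coe_sort N β]
    exact Fintype.prod_equiv e.toEquiv _ _ (fun i => rfl)
  have hsplit : ∀ (g : Fin (d + 1) → ℝ), ∑ n, g n = g m + ∑ i, g (f i) := by
    intro g
    rw [hsumN, ← huniv, Finset.sum_insert hmN]
  have hsplitV : ∀ (g : Fin (d + 1) → (Fin d → ℝ)), ∑ n, g n = g m + ∑ i, g (f i) := by
    intro g
    rw [hsumNV, ← huniv, Finset.sum_insert hmN]
  -- matrices
  set Bmat : Matrix (Fin d) (Fin d) ℝ := Matrix.of fun r c => p (f c) r - p m r with hBmat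
  set Mmat : Matrix (Fin d) (Fin d) ℝ :=
    Matrix.of fun r c => β (f c) * (p (f c) r - p m r) with hMmat
  have hdetM : Mmat.det = (∏ c, β (f c)) * Bmat.det := Matrix.det_mul_row _ _
  have hBapp : ∀ t : Fin d → ℝ, (Matrix.toLin' Bmat) t = ∑ i, t i • (p (f i) - p m) := by
    intro t
    funext r
    rw [Matrix.toLin'_apply]
    simp only [Matrix.mulVec, dotProduct, hBmat, Matrix.of_apply, Finset.sum_apply,
      Pi.smul_apply, Pi.sub_apply, smul_eq_mul]
    exact Finset.sum_congr rfl fun j _ => mul_comm _ _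
  have hMapp : ∀ t : Fin d → ℝ,
      (Matrix.toLin' Mmat) t = ∑ i, (t i * β (f i)) • (p (f i) - p m) := by
    intro t
    funext r
    rw [Matrix.toLin'_apply]
    simp only [Matrix.mulVec, dotProduct, hMmat, Matrix.of_apply, Finset.sum_apply,
      Pi.smul_apply, Pi.sub_apply, smul_eq_mul]
    exact Finset.sum_congr rfl fun j _ => by ring
  -- affine combination identity
  have haff : ∀ γ : Fin (d + 1) → ℝ, ∑ n, γ n = 1 →
      ∑ n, γ n • p n = p m + (Matrix.toLin' Bmat) (fun i => γ (f i)) := by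
    intro γ hγ
    rw [hBapp]
    have hsm : γ m = 1 - ∑ i, γ (f i) := by
      have := hsplit γ
      rw [hγ] at this
      linarith
    have h2 : ∑ n, γ n • p n = γ m • p m + ∑ i, γ (f i) • p (f i) :=
      hsplitV (fun n => γ n • p n)
    rw [h2, hsm]
    have h3 : ∑ i, γ (f i) • (p (f i) - p m)
        = ∑ i, γ (f i) • p (f i) - (∑ i, γ (f i)) • p m := by
      rw [Finset.sum_smul]
      rw [← Finset.sum_sub_distrib]
      exact Finset.sum_congr rfl fun i _ => smul_sub _ _ _
    rw [h3, sub_smul, one_smul]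
    abel
  -- the simplex
  set Δ : Set (Fin d → ℝ) := {x | (∀ i, 0 ≤ x i) ∧ ∑ i, x i ≤ 1} with hΔ
  -- T as affine image of Δ
  have hTimg : convexHull ℝ (Set.range p)
      = (fun y => p m + y) '' (⇑(Matrix.toLin' Bmat) '' Δ) := by
    apply Set.Subset.antisymm
    · intro x hx
      rw [convexHull_range_eq_exists_affineCombination] at hx
      obtain ⟨s, w, hw0, hws, hcomb⟩ := hx
      set γ : Fin (d + 1) → ℝ := fun n => if n ∈ s then w n else 0 with hγdef
      have hγ0 : ∀ n, 0 ≤ γ n := by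
        intro n
        by_cases h : n ∈ s
        · have h1 : γ n = w n := if_pos h
          rw [h1]; exact hw0 n h
        · have h1 : γ n = 0 := if_neg h
          rw [h1]
      have hγsum : ∑ n, γ n = 1 := by
        rw [hγdef, Finset.sum_ite_mem, Finset.univ_inter, hws]
      have heq2 : ∑ n ∈ s, γ n • p n = ∑ n, γ n • p n :=
        Finset.sum_subset (Finset.subset_univ s) (fun n _ hn => by
          have h1 : γ n = 0 := if_neg hn
          rw [h1, zero_smul])
      have hx2 : x = ∑ n, γ n • p n := by
        rw [← hcomb, Finset.affineCombination_eq_linear_combination _ _ _ hws, ← heq2]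
        refine Finset.sum_congr rfl fun n hn => ?_
        have h1 : γ n = w n := if_pos hn
        rw [h1]
      refine ⟨(Matrix.toLin' Bmat) (fun i => γ (f i)), ⟨fun i => γ (f i), ?_, rfl⟩, ?_⟩
      · constructor
        · exact fun i => hγ0 (f i)
        · have h1 : ∑ i, γ (f i) ≤ ∑ n, γ n := by
            rw [hsumN]
            exact Finset.sum_le_sum_of_subset_of_nonneg (Finset.subset_univ N)
              (fun n _ _ => hγ0 n)
          rw [hγsum] at h1
          exact h1
      · rw [hx2, haff γ hγsum]
    · rintro - ⟨-, ⟨t, ⟨ht0, ht1⟩, rfl⟩, rfl⟩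
      set γ : Fin (d + 1) → ℝ :=
        fun n => if h : n ∈ N then t (e.symm ⟨n, h⟩) else 1 - ∑ i, t i with hγdef
      have hγf : ∀ i, γ (f i) = t i := by
        intro i
        have h1 : γ (f i) = t (e.symm ⟨f i, hfN i⟩) := dif_pos (hfN i)
        rw [h1, hesymm i]
      have hγm : γ m = 1 - ∑ i, t i := dif_neg hmN
      have hγsum : ∑ n, γ n = 1 := by
        rw [hsplit γ, hγm]
        have : ∑ i, γ (f i) = ∑ i, t i := Finset.sum_congr rfl fun i _ => hγf i
        rw [this]
        ring
      have hγ0 : ∀ n, 0 ≤ γ n := by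
        intro n
        by_cases h : n ∈ N
        · have h1 : γ n = t (e.symm ⟨n, h⟩) := dif_pos h
          rw [h1]; exact ht0 _
        · have h1 : γ n = 1 - ∑ i, t i := dif_neg h
          rw [h1]; linarith
      have hcomb : p m + (Matrix.toLin' Bmat) t = ∑ n, γ n • p n := by
        have h1 : (fun i => γ (f i)) = t := funext hγf
        rw [haff γ hγsum, h1]
      show p m + (Matrix.toLin' Bmat) t ∈ convexHull ℝ (Set.range p)
      rw [hcomb]
      have h2 : (Finset.univ : Finset (Fin (d + 1))).centerMass γ p = ∑ n, γ n • p n :=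
        Finset.centerMass_eq_of_sum_1 _ _ hγsum
      rw [← h2]
      exact Finset.centerMass_mem_convexHull _ (fun n _ => hγ0 n) (by rw [hγsum]; norm_num)
        (fun n _ => Set.mem_range_self n)
  -- volume of T
  have hvolT : volume (convexHull ℝ (Set.range p))
      = ENNReal.ofReal |Bmat.det| * volume Δ := by
    rw [hTimg]
    have h1 : (fun y => p m + y) '' (⇑(Matrix.toLin' Bmat) '' Δ)
        = p m +ᵥ (⇑(Matrix.toLin' Bmat) '' Δ) := by
      rw [← Set.image_vadd]; rfl
    rw [h1, measure_vadd (μ := volume), Measure.addHaar_image_linearMap,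
      LinearMap.det_toLin']
  -- Minkowski part: |Mmat.det| ≤ 1
  set box : Set (Fin d → ℝ) := Set.pi univ fun _ : Fin d => Ioo (-1 : ℝ) 1 with hbox
  set S : Set (Fin d → ℝ) := ⇑(Matrix.toLin' Mmat) '' box with hS
  have hSconv : Convex ℝ S := (convex_pi fun _ _ => convex_Ioo _ _).linear_image _
  have hSsymm : ∀ x ∈ S, -x ∈ S := by
    rintro - ⟨t, ht, rfl⟩
    refine ⟨-t, fun i _ => ?_, map_neg _ t⟩
    have h1 := ht i (mem_univ i)
    simp only [mem_Ioo] at h1 ⊢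
    constructor <;> simp only [Pi.neg_apply] <;> linarith [h1.1, h1.2]
  have hvolbox : volume box = 2 ^ d := by
    rw [hbox, volume_pi_pi]
    simp only [Real.volume_Ioo]
    rw [Finset.prod_const, Finset.card_univ, Fintype.card_fin]
    norm_num
  have hvolS : volume S = ENNReal.ofReal |Mmat.det| * 2 ^ d := by
    rw [hS, Measure.addHaar_image_linearMap, LinearMap.det_toLin', hvolbox]
  -- the key interior-point lemma
  have hkey : ∀ t : Fin d → ℝ, (∀ i, t i ∈ Ioo (-1 : ℝ) 1) →
      (∀ j, ∃ z : ℤ, (z : ℝ) = (Matrix.toLin' Mmat) t j) →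
      (∑ i, t i * β (f i)) ≤ 0 → (Matrix.toLin' Mmat) t = 0 := by
    intro t ht hz hc
    set c : ℝ := ∑ i, t i * β (f i) with hcdef
    set δ : Fin (d + 1) → ℝ :=
      fun n => if h : n ∈ N then t (e.symm ⟨n, h⟩) * β n else -c with hδdef
    set γ : Fin (d + 1) → ℝ := fun n => β n + δ n with hγdef
    have hδf : ∀ i, δ (f i) = t i * β (f i) := by
      intro i
      have h1 : δ (f i) = t (e.symm ⟨f i, hfN i⟩) * β (f i) := dif_pos (hfN i)
      rw [h1, hesymm i]
    have hδm : δ m = -c := dif_neg hmN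
    have hγsum : ∑ n, γ n = 1 := by
      have h1 : ∑ n, γ n = ∑ n, β n + ∑ n, δ n := by
        rw [hγdef, Finset.sum_add_distrib]
      have h2 : ∑ n, δ n = 0 := by
        rw [hsplit δ, hδm]
        have : ∑ i, δ (f i) = c := Finset.sum_congr rfl fun i _ => hδf i
        rw [this]; ring
      rw [h1, h2, hβsum, add_zero]
    have hγpos : ∀ n, 0 < γ n := by
      intro n
      by_cases h : n ∈ N
      · have h1 : δ n = t (e.symm ⟨n, h⟩) * β n := dif_pos h
        have h2 : γ n = β n + δ n := rfl
        rw [h2, h1]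
        have h3 := ht (e.symm ⟨n, h⟩)
        simp only [mem_Ioo] at h3
        nlinarith [hβpos n, h3.1]
      · have h1 : δ n = -c := dif_neg h
        have h2 : γ n = β n + δ n := rfl
        rw [h2, h1]
        have := hβpos n
        linarith
    have hγcomb : ∑ n, γ n • p n = (fun j => ((q j : ℤ) : ℝ)) + (Matrix.toLin' Mmat) t := by
      have h1 : ∑ n, γ n • p n = ∑ n, β n • p n + ∑ n, δ n • p n := by
        rw [← Finset.sum_add_distrib]
        exact Finset.sum_congr rfl fun n _ => by rw [hγdef, add_smul]
      have h2 : ∑ n, δ n • p n = (-c) • p m + ∑ i, (t i * β (f i)) • p (f i) := by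
        rw [hsplitV (fun n => δ n • p n), hδm]
        congr 1
        exact Finset.sum_congr rfl fun i _ => by rw [hδf i]
      have h3 : (Matrix.toLin' Mmat) t
          = ∑ i, (t i * β (f i)) • p (f i) - c • p m := by
        rw [hMapp]
        have h4 : ∑ i, (t i * β (f i)) • (p (f i) - p m)
            = ∑ i, (t i * β (f i)) • p (f i) - (∑ i, t i * β (f i)) • p m := by
          rw [Finset.sum_smul, ← Finset.sum_sub_distrib]
          exact Finset.sum_congr rfl fun i _ => smul_sub _ _ _
        rw [h4, ← hcdef]
      rw [h1, h2, h3, hbar, neg_smul]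
      abel
    -- interior membership
    obtain ⟨z, hzeq⟩ : ∃ z : Fin d → ℤ, ∀ j, (z j : ℝ) = (Matrix.toLin' Mmat) t j := by
      choose z hz using hz
      exact ⟨z, hz⟩
    have hq'cast : (fun j => (((q j + z j : ℤ)) : ℝ))
        = (fun j => ((q j : ℤ) : ℝ)) + (Matrix.toLin' Mmat) t := by
      funext j
      push_cast
      rw [hzeq j]
      rfl
    have hmem : (fun j => (((q j + z j : ℤ)) : ℝ)) ∈
        interior (convexHull ℝ (Set.range p)) := by
      rw [← hb, AffineBasis.interior_convexHull]
      intro i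
      rw [hq'cast, ← hγcomb, hcoord γ hγsum i]
      exact hγpos i
    have hq' := huniq (fun j => q j + z j) hmem
    have hz0 : ∀ j, z j = 0 := by
      intro j
      have := congrFun hq' j
      omega
    funext j
    rw [← hzeq j]
    simp [hz0 j]
  -- apply Minkowski
  have hdet1 : |Mmat.det| ≤ 1 := by
    by_contra hgt
    push_neg at hgt
    set L : AddSubgroup (Fin d → ℝ) :=
      (Submodule.span ℤ (Set.range ⇑(Pi.basisFun ℝ (Fin d)))).toAddSubgroup with hL
    have hLc : Countable ↥L := by
      have h : (Submodule.span ℤ (Set.range ⇑(Pi.basisFun ℝ (Fin d)))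
          : Set (Fin d → ℝ)).Countable := by
        have hsub : (Submodule.span ℤ (Set.range ⇑(Pi.basisFun ℝ (Fin d)))
            : Set (Fin d → ℝ)) ⊆ Set.range (fun v : Fin d → ℤ => fun j => (v j : ℝ)) := by
          intro x hx
          rw [SetLike.mem_coe, Module.Basis.mem_span_iff_repr_mem] at hx
          choose z hz using hx
          exact ⟨fun j => z j, funext fun j => by simpa using hz j⟩
        exact (Set.countable_range _).mono hsub
      exact h.to_subtype
    have fund := ZSpan.isAddFundamentalDomain' (Pi.basisFun ℝ (Fin d)) volume
    have hμF : volume (ZSpan.fundamentalDomain (Pi.basisFun ℝ (Fin d))) = 1 := by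
      rw [ZSpan.fundamentalDomain_pi_basisFun, volume_pi_pi]
      simp [Real.volume_Ico]
    have hlt : volume (ZSpan.fundamentalDomain (Pi.basisFun ℝ (Fin d)))
        * 2 ^ Module.finrank ℝ (Fin d → ℝ) < volume S := by
      rw [hμF, one_mul, hfr, hvolS]
      have h2 : (2 : ℝ≥0∞) ^ d ≠ 0 := by positivity
      have h3 : (2 : ℝ≥0∞) ^ d ≠ ⊤ := by
        exact ENNReal.pow_ne_top (by norm_num)
      calc (2 : ℝ≥0∞) ^ d = 1 * 2 ^ d := (one_mul _).symm
        _ < ENNReal.ofReal |Mmat.det| * 2 ^ d := by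
            refine ENNReal.mul_lt_mul_left h2 h3 ?_
            exact ENNReal.one_lt_ofReal.2 hgt
    obtain ⟨x, hx0, hxS⟩ :=
      exists_ne_zero_mem_lattice_of_measure_mul_two_pow_lt_measure fund hSsymm hSconv hlt
    obtain ⟨t, htbox, hxt⟩ := hxS
    have htIoo : ∀ i, t i ∈ Ioo (-1 : ℝ) 1 := fun i => htbox i (mem_univ i)
    have hint : ∀ j, ∃ z : ℤ, (z : ℝ) = (x : Fin d → ℝ) j := by
      have hxmem : (x : Fin d → ℝ) ∈
          Submodule.span ℤ (Set.range ⇑(Pi.basisFun ℝ (Fin d))) := x.2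
      rw [Module.Basis.mem_span_iff_repr_mem] at hxmem
      intro j
      obtain ⟨z, hzz⟩ := hxmem j
      exact ⟨z, by simpa using hzz⟩
    have hxne : (x : Fin d → ℝ) ≠ 0 := by
      intro h
      exact hx0 (by ext; exact congrFun h _ )
    rcases le_or_gt (∑ i, t i * β (f i)) 0 with hc | hc
    · apply hxne
      rw [← hxt]
      exact hkey t htIoo (fun j => by rw [hxt]; exact hint j) hc
    · have h1 : (Matrix.toLin' Mmat) (-t) = 0 := by
        apply hkey (-t)
        · intro i
          have := htIoo i
          simp only [mem_Ioo, Pi.neg_apply] at this ⊢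
          constructor <;> linarith [this.1, this.2]
        · intro j
          obtain ⟨z, hzz⟩ := hint j
          refine ⟨-z, ?_⟩
          rw [map_neg]
          push_cast
          rw [hzz, hxt]
          rfl
        · have : ∑ i, (-t) i * β (f i) = -(∑ i, t i * β (f i)) := by
            rw [← Finset.sum_neg_distrib]
            exact Finset.sum_congr rfl fun i _ => by simp [neg_mul]
          rw [this]
          linarith
      apply hxne
      rw [← hxt]
      have h2 := congrArg Neg.neg h1
      rw [← map_neg, neg_neg] at h2
      rw [h2]
      exact neg_zero
  -- final arithmetic
  have hprodpos : 0 < ∏ n ∈ N, β n := Finset.prod_pos fun n _ => hβpos n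
  have hBbound : |Bmat.det| * ∏ n ∈ N, β n ≤ 1 := by
    have h1 : |Mmat.det| = (∏ n ∈ N, β n) * |Bmat.det| := by
      rw [hdetM, abs_mul, hprodN, abs_of_pos hprodpos]
    nlinarith [hdet1, h1]
  have hfactpos : (0 : ℝ) < d.factorial := by exact_mod_cast d.factorial_pos
  calc volume (convexHull ℝ (Set.range p))
      = ENNReal.ofReal |Bmat.det| * volume Δ := hvolT
    _ ≤ ENNReal.ofReal |Bmat.det| * ENNReal.ofReal (1 / d.factorial) := by
        exact mul_le_mul_right (simplex_vol' d) _
    _ = ENNReal.ofReal (|Bmat.det| * (1 / d.factorial)) := by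
        rw [ENNReal.ofReal_mul (abs_nonneg _)]
    _ ≤ ENNReal.ofReal (1 / ((d.factorial : ℝ) * ∏ n ∈ N, β n)) := by
        apply ENNReal.ofReal_le_ofReal
        rw [mul_one_div, div_le_div_iff₀ hfactpos (by positivity)]
        calc |Bmat.det| * ((d.factorial : ℝ) * ∏ n ∈ N, β n)
            = (d.factorial : ℝ) * (|Bmat.det| * ∏ n ∈ N, β n) := by ring
          _ ≤ (d.factorial : ℝ) * 1 := mul_le_mul_of_nonneg_left hBbound hfactpos.le
          _ = 1 * (d.factorial : ℝ) := by ring
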